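/- Let n and d be positive integers with d ≤ n, and let q_1 > q_2 > ⋯ > q_{d−1} be a strictly decreasing sequence of integers satisfying q_{d−1} ≥ 2 and q_1 ≤ n−d+1. Then d! · ∏_{i=1}^{d−1}(n−i) ≤ ∏_{i=1}^{d−1} q_i(n−q_i+1). -/

import Mathlib

open scoped Classical

namespace MultConj

variable {n : ℕ}

/-- `K` is (the set of faces of) an abstract simplicial complex on the
vertex set `Fin n`: it contains the empty face and is closed under subsets. -/
def IsComplex (K : Finset (Finset (Fin n))) : Prop :=
  ∅ ∈ K ∧ ∀ F ∈ K, ∀ G ⊆ F, G ∈ K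

/-- The induced subcomplex `Δ_W` on a vertex set `W`. -/
def induced (K : Finset (Finset (Fin n))) (W : Finset (Fin n)) :
    Finset (Finset (Fin n)) :=
  K.filter fun F => F ⊆ W

/-- The link of a face `F`. -/
def link (K : Finset (Finset (Fin n))) (F : Finset (Fin n)) :
    Finset (Finset (Fin n)) :=
  K.filter fun G => F ∩ G = ∅ ∧ F ∪ G ∈ K

/-- The `i`-skeleton: all faces of dimension at most `i`,
i.e. with at most `i+1` vertices. -/
def skel (K : Finset (Finset (Fin n))) (i : ℕ) : Finset (Finset (Fin n)) :=
  K.filter fun F => F.card ≤ i + 1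

/-- The number of faces with `j` vertices, i.e. `f_{j-1}(K)`. -/
def fcount (K : Finset (Finset (Fin n))) (j : ℕ) : ℕ :=
  (K.filter fun F => F.card = j).card

/-- The dimension of `K`, as an integer. -/
noncomputable def dimOf (K : Finset (Finset (Fin n))) : ℤ :=
  ((K.sup fun F => F.card : ℕ) : ℤ) - 1

variable (k : Type) [Field k]

/-- Simplicial chains supported on the faces of `K` having `j` vertices
(that is, `(j-1)`-dimensional chains), with coefficients in `k`. -/
abbrev chain (K : Finset (Finset (Fin n))) (j : ℕ) : Type :=
  {F : Finset (Fin n) // F ∈ K ∧ F.card = j} → k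

/-- The simplicial boundary operator (with the standard orientation coming
from the linear order on the vertices), viewed as landing in the space of
all functions on finsets. -/
noncomputable def bdry (K : Finset (Finset (Fin n))) (j : ℕ)
    (c : chain k K j) : Finset (Fin n) → k :=
  fun G => ∑ v : Fin n,
    if h : v ∉ G ∧ insert v G ∈ K ∧ (insert v G).card = j then
      (-1 : k) ^ (G.filter fun w => w < v).card * c ⟨insert v G, h.2⟩
    else 0

/-- Extension of a chain by zero to a function on all finsets. -/
def ext (K : Finset (Finset (Fin n))) (j : ℕ) (c : chain k K j) :
    Finset (Fin n) → k :=
  fun F => if h : F ∈ K ∧ F.card = j then c ⟨F, h⟩ else 0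

/-- `H̃_p(K; k) ≠ 0`: there is a reduced `p`-cycle which is not a boundary.
(For `p ≤ -2` this is false, as there is no `j : ℕ` with `j = p + 1`.) -/
def homNonzero (K : Finset (Finset (Fin n))) (p : ℤ) : Prop :=
  ∃ j : ℕ, (j : ℤ) = p + 1 ∧
    ∃ c : chain k K j, bdry k K j c = 0 ∧
      ∀ b : chain k K (j + 1), bdry k K (j + 1) b ≠ ext k K j c

/-- `H̃_p(K; k) ≅ k`: there is a reduced `p`-cycle `z` which is not a
boundary, and modulo boundaries every `p`-cycle is a multiple of `z`. -/
def homIsK (K : Finset (Finset (Fin n))) (p : ℤ) : Prop :=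
  ∃ j : ℕ, (j : ℤ) = p + 1 ∧
    ∃ z : chain k K j, bdry k K j z = 0 ∧
      (∀ b : chain k K (j + 1), bdry k K (j + 1) b ≠ ext k K j z) ∧
      ∀ c : chain k K j, bdry k K j c = 0 →
        ∃ a : k, ∃ b : chain k K (j + 1),
          bdry k K (j + 1) b = ext k K j (c - a • z)

/-- Cohen–Macaulayness of `K` over `k`, via Reisner's criterion:
`H̃_i(lk F; k) = 0` for every face `F` and every `i < dim K - |F|`. -/
def IsCM (K : Finset (Finset (Fin n))) : Prop :=
  ∀ F ∈ K, ∀ i : ℤ, i < dimOf K - F.card → ¬ homNonzero k (link K F) i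

/-- `K` is `q`-Cohen–Macaulay over `k`: removing any at most `q - 1`
vertices leaves a Cohen–Macaulay complex of the same dimension. -/
def IsQCM (q : ℕ) (K : Finset (Finset (Fin n))) : Prop :=
  ∀ U : Finset (Fin n), U.card ≤ q - 1 →
    IsCM k (induced K Uᶜ) ∧ dimOf (induced K Uᶜ) = dimOf K

/-- `q(K)`: the largest `q` for which `K` is `q`-CM over `k`. -/
noncomputable def qConn (K : Finset (Finset (Fin n))) : ℕ :=
  sSup {q : ℕ | IsQCM k q K}

/-- The CM-connectivity sequence: `q_i = q(Skel_i K)`. -/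
noncomputable def qSeq (K : Finset (Finset (Fin n))) (i : ℕ) : ℕ :=
  qConn k (skel K i)

/-- The minimal shifts `m_i` in the minimal free resolution of the face ring,
via Hochster's formula. -/
noncomputable def mshift (K : Finset (Finset (Fin n))) (i : ℕ) : ℕ :=
  sInf {m : ℕ | ∃ W : Finset (Fin n), W.card = m ∧
    homNonzero k (induced K W) ((W.card : ℤ) - i - 1)}

/-- The maximal shifts `M_i` in the minimal free resolution of the face ring,
via Hochster's formula. -/
noncomputable def Mshift (K : Finset (Finset (Fin n))) (i : ℕ) : ℕ :=
  sSup {m : ℕ | ∃ W : Finset (Fin n), W.card = m ∧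
    homNonzero k (induced K W) ((W.card : ℤ) - i - 1)}

/-- `K` is pure: every maximal face has cardinality `dim K + 1`. -/
def IsPure (K : Finset (Finset (Fin n))) : Prop :=
  ∀ F ∈ K, (∀ G ∈ K, F ⊆ G → G = F) → (F.card : ℤ) = dimOf K + 1

/-- `K` is connected: any two vertices are joined by a path of edges. -/
def Connected (K : Finset (Finset (Fin n))) : Prop :=
  ∀ u v : Fin n, {u} ∈ K → {v} ∈ K →
    Relation.ReflTransGen (fun a b => ({a, b} : Finset (Fin n)) ∈ K) u v

/-- `K` is Gorenstein* over `k`; by Stanley's topological characterization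
this means that `K` is a `k`-homology sphere: for every face `F` the link of
`F` has vanishing reduced homology below dimension `dim K - |F|` and reduced
homology isomorphic to `k` in dimension `dim K - |F|`. -/
def IsGorensteinStar (K : Finset (Finset (Fin n))) : Prop :=
  IsComplex K ∧
  (∀ F ∈ K, ∀ i : ℤ, i < dimOf K - F.card → ¬ homNonzero k (link K F) i) ∧
  (∀ F ∈ K, homIsK k (link K F) (dimOf K - F.card))

/-- The key arithmetic inequality in the 2-CM case: if
`q_1 > q_2 > ⋯ > q_{d-1}` are integers with `q_{d-1} ≥ 2` and
`q_1 ≤ n - d + 1`, then `d! ∏_{i=1}^{d-1} (n - i) ≤ ∏_{i=1}^{d-1} q_i (n - q_i + 1)`. -/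
theorem arithmetic_ineq_2CM
    (n d : ℕ) (q : ℕ → ℤ) (hn : 0 < n) (hd : 0 < d) (hdn : d ≤ n)
    (hdec : ∀ i : ℕ, 1 ≤ i → i < d - 1 → q (i + 1) < q i)
    (hlast : 1 < d → 2 ≤ q (d - 1))
    (hfirst : 1 < d → q 1 ≤ (n : ℤ) - d + 1) :
    (d.factorial : ℤ) * ∏ i ∈ Finset.Icc 1 (d - 1), ((n : ℤ) - i) ≤
      ∏ i ∈ Finset.Icc 1 (d - 1), q i * ((n : ℤ) - q i + 1) := by
  -- lower bound: q (d-1-t) ≥ 2 + t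
  have hlb' : ∀ t : ℕ, 1 ≤ d - 1 - t → 2 + (t : ℤ) ≤ q (d - 1 - t) := by
    intro t
    induction t with
    | zero =>
      intro h
      simpa using hlast (by omega)
    | succ t ih =>
      intro h
      have h1 : d - 1 - t = (d - 1 - (t + 1)) + 1 := by omega
      have h2 : 1 ≤ d - 1 - t := by omega
      have h3 := ih h2
      have h4 := hdec (d - 1 - (t + 1)) (by omega) (by omega)
      rw [← h1] at h4
      push_cast
      push_cast at h3
      linarith
  have hbound : ∀ i : ℕ, 1 ≤ i → i ≤ d - 1 →
      (d : ℤ) - i + 1 ≤ q i ∧ q i ≤ (n : ℤ) - d + 1 := by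
    intro i hi1 hid
    constructor
    · have := hlb' (d - 1 - i) (by omega)
      have he : d - 1 - (d - 1 - i) = i := by omega
      rw [he] at this
      have hc : ((d - 1 - i : ℕ) : ℤ) = (d : ℤ) - 1 - i := by
        push_cast [Nat.cast_sub (by omega : i ≤ d - 1), Nat.cast_sub (by omega : 1 ≤ d)]
        ring
      rw [hc] at this
      linarith
    · have hB : ∀ j : ℕ, 1 ≤ j → j ≤ d - 1 → q j ≤ q 1 := by
        intro j hj1
        induction j with
        | zero => omega
        | succ j ih =>
          intro hjd
          by_cases hj : j = 0
          · subst hj; simp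
          · have hj1' : 1 ≤ j := by omega
            have h4 := hdec j hj1' (by omega)
            have h5 := ih hj1' (by omega)
            linarith
      exact le_trans (hB i hi1 hid) (hfirst (by omega))
  -- the product identity
  have hfac : ∀ m : ℕ, ∏ i ∈ Finset.Icc 1 m, (i + 1) = (m + 1).factorial := by
    intro m
    induction m with
    | zero => simp
    | succ m ih =>
      rw [Finset.prod_Icc_succ_top (by omega), ih, Nat.factorial_succ (m + 1)]
      ring
  have hid2 : (d.factorial : ℤ) * ∏ i ∈ Finset.Icc 1 (d - 1), ((n : ℤ) - i)
      = ∏ i ∈ Finset.Icc 1 (d - 1), (((d : ℤ) - i + 1) * ((n : ℤ) - d + i)) := by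
    have hrefl : ∏ i ∈ Finset.Icc 1 (d - 1), (((d : ℤ) - i + 1) * ((n : ℤ) - d + i))
        = ∏ i ∈ Finset.Icc 1 (d - 1), (((i : ℤ) + 1) * ((n : ℤ) - i)) := by
      apply Finset.prod_nbij' (fun i => d - i) (fun i => d - i)
      · intro a ha; simp only [Finset.mem_Icc] at *; omega
      · intro a ha; simp only [Finset.mem_Icc] at *; omega
      · intro a ha; simp only [Finset.mem_Icc] at *; omega
      · intro a ha; simp only [Finset.mem_Icc] at *; omega
      · intro a ha
        simp only [Finset.mem_Icc] at ha
        have : ((d - a : ℕ) : ℤ) = (d : ℤ) - a := by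
          rw [Nat.cast_sub (by omega)]
        rw [this]
        ring
    rw [hrefl, Finset.prod_mul_distrib]
    have hf : ∏ i ∈ Finset.Icc 1 (d - 1), ((i : ℤ) + 1) = (d.factorial : ℤ) := by
      have := hfac (d - 1)
      have hd1 : d - 1 + 1 = d := by omega
      rw [hd1] at this
      rw [← this]
      push_cast
      rfl
    rw [hf]
  rw [hid2]
  apply Finset.prod_le_prod
  · intro i hi
    simp only [Finset.mem_Icc] at hi
    have hid' : i ≤ d := by omega
    have hic : (i : ℤ) ≤ (d : ℤ) := by exact_mod_cast hid'
    have hdc : (d : ℤ) ≤ (n : ℤ) := by exact_mod_cast hdn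
    have hic1 : (1 : ℤ) ≤ (i : ℤ) := by exact_mod_cast hi.1
    exact mul_nonneg (by linarith) (by linarith)
  · intro i hi
    simp only [Finset.mem_Icc] at hi
    obtain ⟨hl, hu⟩ := hbound i hi.1 hi.2
    have hii : (1 : ℤ) ≤ (i : ℤ) := by exact_mod_cast hi.1
    have hub : q i ≤ (n : ℤ) - d + i := by linarith
    nlinarith [mul_nonneg (by linarith : (0:ℤ) ≤ q i - ((d:ℤ) - i + 1)) (by linarith : (0:ℤ) ≤ (n:ℤ) - d + i - q i)]

end MultConj
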